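/- arXiv:2602.14455 — 6 statements merged into one kernel-verified Lean document; each statement's English description precedes it below -/
import Mathlib

section
/- Fix reals s and y₀, and let U₀, U₁, …, U_h be i.i.d. standard Gaussian random variables. For δ ∈ ℝ, let Y_h(δ) denote the value y_h produced by the QAR(1,1) recursion started at s₋₁ = s, y₋₁ = y₀ with inputs u₀ = U₀ + δ and u_k = U_k for 1 ≤ k ≤ h. Then for every δ ∈ ℝ, E[Y_h(δ) − Y_h(0)] = σ φ₁^h δ + a_h s δ + q_h δ². (This is the conditional average response of the QAR(1,1) model: a baseline effect σφ₁^h δ, a state-dependent effect a_h s δ, and a higher-order effect q_h δ².) -/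
open MeasureTheory ProbabilityTheory

/-- The state process of the QAR(1,1) recursion:
`s k = φ₁ * s (k-1) + σ * u k`, started at `s (-1) = sInit`. -/
def qarS (φ1 σ : ℝ) (sInit : ℝ) (u : ℕ → ℝ) : ℕ → ℝ
  | 0 => φ1 * sInit + σ * u 0
  | k + 1 => φ1 * qarS φ1 σ sInit u k + σ * u (k + 1)

/-- The outcome process of the QAR(1,1) recursion:
`y k = φ₁ * y (k-1) + φ₂ * (s (k-1))^2 + (1 + γ * s (k-1)) * σ * u k`,
started at `s (-1) = sInit`, `y (-1) = yInit`. -/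
def qarY (φ1 φ2 γ σ : ℝ) (sInit yInit : ℝ) (u : ℕ → ℝ) : ℕ → ℝ
  | 0 => φ1 * yInit + φ2 * sInit ^ 2 + (1 + γ * sInit) * σ * u 0
  | k + 1 => φ1 * qarY φ1 φ2 γ σ sInit yInit u k
      + φ2 * (qarS φ1 σ sInit u k) ^ 2
      + (1 + γ * qarS φ1 σ sInit u k) * σ * u (k + 1)

/- ### Auxiliary material -/

open Real in
lemma gaussianPDFReal_zero_one' (x : ℝ) :
    gaussianPDFReal 0 1 x = (Real.sqrt (2 * π))⁻¹ * Real.exp (-(2⁻¹) * x ^ 2) := by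
  simp only [gaussianPDFReal, NNReal.coe_one, mul_one, sub_zero]
  ring_nf

lemma integrable_id_gaussianReal01 :
    Integrable (fun x : ℝ => x) (gaussianReal 0 1) := by
  rw [gaussianReal_of_var_ne_zero 0 one_ne_zero,
    integrable_withDensity_iff (measurable_gaussianPDF 0 1)
      (ae_of_all _ fun x => ENNReal.ofReal_lt_top)]
  have he : (fun x : ℝ => x * (gaussianPDF 0 1 x).toReal)
      = fun x : ℝ => (Real.sqrt (2 * Real.pi))⁻¹ * (x * Real.exp (-(2⁻¹) * x ^ 2)) := by
    funext x
    rw [gaussianPDF, ENNReal.toReal_ofReal (gaussianPDFReal_nonneg _ _ _),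
      gaussianPDFReal_zero_one']
    ring
  rw [he]
  exact (integrable_mul_exp_neg_mul_sq (by norm_num : (0:ℝ) < 2⁻¹)).const_mul _

lemma integral_id_gaussianReal01 : ∫ x, x ∂(gaussianReal 0 1) = 0 := by
  rw [gaussianReal_of_var_ne_zero 0 one_ne_zero]
  have hmeas : Measurable fun x : ℝ => (gaussianPDFReal 0 1 x).toNNReal :=
    (measurable_gaussianPDFReal 0 1).real_toNNReal
  have hd : volume.withDensity (gaussianPDF 0 1)
      = volume.withDensity fun x => ((gaussianPDFReal 0 1 x).toNNReal : ENNReal) := rfl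
  rw [hd, integral_withDensity_eq_integral_smul hmeas]
  set f := fun x : ℝ => (gaussianPDFReal 0 1 x).toNNReal • x with hf
  have hodd : (fun x => f (-x)) = fun x => - f x := by
    funext x
    simp only [hf, NNReal.smul_def, smul_eq_mul]
    have : gaussianPDFReal 0 1 (-x) = gaussianPDFReal 0 1 x := by
      simp [gaussianPDFReal]
    rw [this]; ring
  have h2 := integral_neg_eq_self f (volume : Measure ℝ)
  rw [hodd, integral_neg] at h2
  linarith

/-- Mean of the difference process, defined recursively. -/
noncomputable def qarM (φ1 φ2 γ σ s δ : ℝ) : ℕ → ℝ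
  | 0 => (1 + γ * s) * σ * δ
  | k + 1 => φ1 * qarM φ1 φ2 γ σ s δ k
      + (2 * φ2 * σ * φ1 ^ k * δ) * (φ1 ^ (k + 1) * s) + φ2 * (σ * φ1 ^ k * δ) ^ 2

/-- Auxiliary quadratic-coefficient sequence. -/
noncomputable def qarW (φ1 : ℝ) : ℕ → ℝ
  | 0 => 0
  | k + 1 => φ1 * qarW φ1 k + (φ1 ^ k) ^ 2

lemma qarW_eq (φ1 : ℝ) : ∀ k, qarW φ1 (k + 1) = φ1 ^ k * ∑ j ∈ Finset.range (k + 1), φ1 ^ j := by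
  intro k
  induction k with
  | zero => simp [qarW]
  | succ k ih =>
      rw [show k + 1 + 1 = (k + 1) + 1 from rfl, qarW, ih, Finset.sum_range_succ (n := k + 1)]
      simp only [pow_succ]
      ring

lemma qarM_eq (φ1 φ2 γ σ s δ : ℝ) : ∀ k, qarM φ1 φ2 γ σ s δ k =
    σ * φ1 ^ k * δ + σ * φ1 ^ k * γ * s * δ
      + 2 * φ2 * s * σ * δ * φ1 ^ k * (∑ j ∈ Finset.range k, φ1 ^ j)
      + φ2 * σ ^ 2 * δ ^ 2 * qarW φ1 k := by
  intro k
  induction k with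
  | zero => simp [qarM, qarW]; ring
  | succ k ih =>
      rw [qarM, qarW, ih, Finset.sum_range_succ, pow_succ]
      ring

/-- For fixed initial values `s, y₀` and i.i.d. standard Gaussian shocks
`U 0, …, U h`, the conditional average response of the QAR(1,1) model at horizon `h` —
the expected difference between the outcome produced with the perturbed shock `U 0 + δ`
and the outcome produced with the baseline shock `U 0` — equals
`σ φ₁^h δ + a_h s δ + q_h δ²`, where
`a_h = σ φ₁^h (γ + 2 φ₂ (1 - φ₁^h)/(1 - φ₁))` and
`q_h = φ₂ σ² (φ₁^(h-1) - φ₁^(2h-1))/(1 - φ₁)`. -/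
theorem qar_conditional_average_response
    {Ω : Type*} [MeasurableSpace Ω] (P : Measure Ω) [IsProbabilityMeasure P]
    (φ1 φ2 γ σ : ℝ) (hφ1 : |φ1| < 1) (h : ℕ) (hh : 1 ≤ h)
    (s y0 : ℝ)
    (U : ℕ → Ω → ℝ)
    (hUmeas : ∀ k, Measurable (U k))
    (hUdist : ∀ k, Measure.map (U k) P = gaussianReal 0 1)
    (hUindep : iIndepFun U P)
    (δ : ℝ) :
    ∫ ω, (qarY φ1 φ2 γ σ s y0 (fun k => if k = 0 then U 0 ω + δ else U k ω) h
          - qarY φ1 φ2 γ σ s y0 (fun k => U k ω) h) ∂P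
      = σ * φ1 ^ h * δ
        + (σ * φ1 ^ h * (γ + 2 * φ2 * (1 - φ1 ^ h) / (1 - φ1))) * s * δ
        + (φ2 * σ ^ 2 * (φ1 ^ (h - 1) - φ1 ^ (2 * h - 1)) / (1 - φ1)) * δ ^ 2 := by
  -- integrability and mean-zero of the shocks
  have hUint : ∀ k, Integrable (U k) P := by
    intro k
    have h1 := integrable_id_gaussianReal01
    rw [← hUdist k] at h1
    exact (integrable_map_measure aestronglyMeasurable_id (hUmeas k).aemeasurable).mp h1
  have hUmean : ∀ k, ∫ ω, U k ω ∂P = 0 := by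
    intro k
    have h2 := integral_map (μ := P) (f := fun x : ℝ => x) (hUmeas k).aemeasurable
      aestronglyMeasurable_id
    rw [hUdist k, integral_id_gaussianReal01] at h2
    exact h2.symm
  -- the perturbed state is the baseline state shifted deterministically
  have hSshift : ∀ (k : ℕ) (ω : Ω),
      qarS φ1 σ s (fun j => if j = 0 then U 0 ω + δ else U j ω) k
        = qarS φ1 σ s (fun j => U j ω) k + σ * φ1 ^ k * δ := by
    intro k ω
    induction k with
    | zero => simp [qarS]; ring
    | succ k ih =>
        rw [qarS, qarS, ih, if_neg (Nat.succ_ne_zero k)]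
        rw [pow_succ]
        ring
  -- integrability and mean of the baseline state
  have hS : ∀ k, Integrable (fun ω => qarS φ1 σ s (fun j => U j ω) k) P ∧
      ∫ ω, qarS φ1 σ s (fun j => U j ω) k ∂P = φ1 ^ (k + 1) * s := by
    intro k
    induction k with
    | zero =>
        have he : (fun ω => qarS φ1 σ s (fun j => U j ω) 0)
            = fun ω => φ1 * s + σ * U 0 ω := by funext ω; rw [qarS]
        constructor
        · rw [he]; exact (integrable_const _).add ((hUint 0).const_mul σ)
        · rw [he, integral_add (integrable_const _) ((hUint 0).const_mul σ),
            integral_const, integral_const_mul, hUmean 0]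
          simp
    | succ k ih =>
        have he : (fun ω => qarS φ1 σ s (fun j => U j ω) (k + 1))
            = fun ω => φ1 * qarS φ1 σ s (fun j => U j ω) k + σ * U (k + 1) ω := by
          funext ω; rw [qarS]
        constructor
        · rw [he]; exact (ih.1.const_mul φ1).add ((hUint (k + 1)).const_mul σ)
        · rw [he, integral_add (ih.1.const_mul φ1) ((hUint (k + 1)).const_mul σ),
            integral_const_mul, integral_const_mul, ih.2, hUmean (k + 1), pow_succ]
          ring
  -- the difference process: integrability and mean
  have key : ∀ k, Integrable (fun ω =>
        qarY φ1 φ2 γ σ s y0 (fun j => if j = 0 then U 0 ω + δ else U j ω) k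
          - qarY φ1 φ2 γ σ s y0 (fun j => U j ω) k) P ∧
      ∫ ω, (qarY φ1 φ2 γ σ s y0 (fun j => if j = 0 then U 0 ω + δ else U j ω) k
          - qarY φ1 φ2 γ σ s y0 (fun j => U j ω) k) ∂P = qarM φ1 φ2 γ σ s δ k := by
    intro k
    induction k with
    | zero =>
        have he : (fun ω =>
            qarY φ1 φ2 γ σ s y0 (fun j => if j = 0 then U 0 ω + δ else U j ω) 0
              - qarY φ1 φ2 γ σ s y0 (fun j => U j ω) 0)
            = fun _ => (1 + γ * s) * σ * δ := by
          funext ω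
          simp only [qarY]
          norm_num
          ring
        constructor
        · rw [he]; exact integrable_const _
        · rw [he, integral_const]; simp [qarM]
    | succ k ih =>
        have he : (fun ω =>
            qarY φ1 φ2 γ σ s y0 (fun j => if j = 0 then U 0 ω + δ else U j ω) (k + 1)
              - qarY φ1 φ2 γ σ s y0 (fun j => U j ω) (k + 1))
            = fun ω =>
              φ1 * (qarY φ1 φ2 γ σ s y0 (fun j => if j = 0 then U 0 ω + δ else U j ω) k
                - qarY φ1 φ2 γ σ s y0 (fun j => U j ω) k)
              + (2 * φ2 * σ * φ1 ^ k * δ) * qarS φ1 σ s (fun j => U j ω) k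
              + (γ * σ ^ 2 * φ1 ^ k * δ) * U (k + 1) ω
              + φ2 * (σ * φ1 ^ k * δ) ^ 2 := by
          funext ω
          rw [qarY, qarY, hSshift k ω, if_neg (Nat.succ_ne_zero k)]
          ring
        have hA : Integrable (fun ω =>
            φ1 * (qarY φ1 φ2 γ σ s y0 (fun j => if j = 0 then U 0 ω + δ else U j ω) k
              - qarY φ1 φ2 γ σ s y0 (fun j => U j ω) k)) P := ih.1.const_mul φ1
        have hB : Integrable (fun ω =>
            (2 * φ2 * σ * φ1 ^ k * δ) * qarS φ1 σ s (fun j => U j ω) k) P :=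
          (hS k).1.const_mul _
        have hC : Integrable (fun ω => (γ * σ ^ 2 * φ1 ^ k * δ) * U (k + 1) ω) P :=
          (hUint (k + 1)).const_mul _
        have hAB : Integrable (fun ω =>
            φ1 * (qarY φ1 φ2 γ σ s y0 (fun j => if j = 0 then U 0 ω + δ else U j ω) k
              - qarY φ1 φ2 γ σ s y0 (fun j => U j ω) k)
            + (2 * φ2 * σ * φ1 ^ k * δ) * qarS φ1 σ s (fun j => U j ω) k) P := hA.add hB
        have hABC : Integrable (fun ω =>
            φ1 * (qarY φ1 φ2 γ σ s y0 (fun j => if j = 0 then U 0 ω + δ else U j ω) k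
              - qarY φ1 φ2 γ σ s y0 (fun j => U j ω) k)
            + (2 * φ2 * σ * φ1 ^ k * δ) * qarS φ1 σ s (fun j => U j ω) k
            + (γ * σ ^ 2 * φ1 ^ k * δ) * U (k + 1) ω) P := hAB.add hC
        constructor
        · rw [he]; exact hABC.add (integrable_const _)
        · rw [he, integral_add hABC (integrable_const _),
            integral_add hAB hC, integral_add hA hB,
            integral_const_mul, integral_const_mul, integral_const_mul,
            ih.2, (hS k).2, hUmean (k + 1), integral_const]
          simp only [measure_univ, probReal_univ, ENNReal.toReal_one, one_smul, mul_zero, add_zero]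
          rw [qarM]
  rw [(key h).2]
  -- closed form for the mean
  obtain ⟨n, rfl⟩ : ∃ n, h = n + 1 := ⟨h - 1, (Nat.succ_pred_eq_of_pos hh).symm⟩
  have hne : φ1 ≠ 1 := ne_of_lt (abs_lt.mp hφ1).2
  have hne' : (1 : ℝ) - φ1 ≠ 0 := sub_ne_zero.mpr (Ne.symm hne)
  rw [qarM_eq, qarW_eq, geom_sum_eq hne, Nat.add_sub_cancel,
    show 2 * (n + 1) - 1 = 2 * n + 1 by omega]
  have hp : φ1 ^ (2 * n + 1) = φ1 ^ n * φ1 ^ (n + 1) := by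
    rw [← pow_add]; congr 1; omega
  have hne'' : φ1 - 1 ≠ 0 := sub_ne_zero.mpr hne
  rw [hp]
  field_simp
  ring
end

section
/- Let Y₋ and S₋ be random variables on a probability space with E[S₋] = 0, E[S₋²] < ∞ and E[|Y₋|] < ∞, and let U₀, U₁, …, U_h be i.i.d. standard Gaussian random variables independent of the pair (Y₋, S₋). Let y_h be the random variable produced by the QAR(1,1) recursion started at s₋₁ = S₋, y₋₁ = Y₋ with inputs u_k = U_k for 0 ≤ k ≤ h. Then E[y_h · U₀] = σ φ₁^h. In particular, the population coefficient of a linear local projection of y_h on the observed shock U₀, namely E[y_h U₀]/Var(U₀), equals σ φ₁^h, the impulse response that would obtain if the data were generated by the linear AR(1) model y_t = φ₁ y_{t−1} + σ u_t; the linear local projection thus captures none of the nonlinearity of the QAR(1,1) model. -/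
open MeasureTheory ProbabilityTheory Real

/-! ### Auxiliary lemmas -/

lemma qar_aux_odd_integral_zero (f : ℝ → ℝ) (h : ∀ x, f (-x) = -f x) : ∫ x, f x = 0 := by
  have A : MeasurableEmbedding (fun x : ℝ => -x) :=
    (Homeomorph.neg ℝ).isClosedEmbedding.measurableEmbedding
  have h1 : ∫ x, f x = ∫ x, f (-x) := by
    conv_lhs => rw [← Measure.map_neg_eq_self (volume : Measure ℝ)]
    rw [A.integral_map]
  have h2 : ∫ x, f (-x) = - ∫ x, f x := by
    simp_rw [h]; exact integral_neg f
  linarith [h1, h2]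

lemma qar_aux_gauss_pdf_eq :
    gaussianPDFReal 0 1 = fun x => (Real.sqrt (2*π))⁻¹ * rexp (-x^2/2) := by
  funext x
  simp [gaussianPDFReal]

lemma qar_aux_int_pow_exp_half (n : ℕ) :
    Integrable (fun x : ℝ => x ^ n * rexp (-x^2/2)) := by
  have hs : (-1 : ℝ) < n := by
    have : (0:ℝ) ≤ n := Nat.cast_nonneg n
    linarith
  have h := integrable_rpow_mul_exp_neg_mul_sq (by norm_num : (0:ℝ) < 1/2) hs
  convert h using 2 with x
  rw [Real.rpow_natCast]
  ring_nf

lemma qar_aux_gauss_repr : gaussianReal 0 1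
    = (volume : Measure ℝ).withDensity
      (fun x => ((gaussianPDFReal 0 1 x).toNNReal : ENNReal)) := by
  rw [gaussianReal_of_var_ne_zero _ one_ne_zero]
  rfl

lemma qar_aux_integral_gauss (g : ℝ → ℝ) :
    ∫ x, g x ∂(gaussianReal 0 1) = ∫ x, gaussianPDFReal 0 1 x * g x := by
  rw [qar_aux_gauss_repr,
    integral_withDensity_eq_integral_smul
      ((measurable_gaussianPDFReal 0 1).real_toNNReal) g]
  congr 1
  funext x
  rw [NNReal.smul_def, smul_eq_mul, Real.coe_toNNReal _ (gaussianPDFReal_nonneg 0 1 x)]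

lemma qar_aux_integrable_gauss (g : ℝ → ℝ)
    (h : Integrable (fun x => gaussianPDFReal 0 1 x * g x)) :
    Integrable g (gaussianReal 0 1) := by
  rw [qar_aux_gauss_repr,
    integrable_withDensity_iff_integrable_smul
      ((measurable_gaussianPDFReal 0 1).real_toNNReal)]
  convert h using 1
  · rfl
  funext x
  rw [NNReal.smul_def, smul_eq_mul, Real.coe_toNNReal _ (gaussianPDFReal_nonneg 0 1 x)]

lemma qar_aux_gauss_pdf_even (x : ℝ) :
    gaussianPDFReal 0 1 (-x) = gaussianPDFReal 0 1 x := by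
  rw [qar_aux_gauss_pdf_eq]; simp [neg_sq]

lemma qar_aux_int_pdf_mul_pow (n : ℕ) :
    Integrable (fun x => gaussianPDFReal 0 1 x * x ^ n) := by
  have h := (qar_aux_int_pow_exp_half n).const_mul (Real.sqrt (2*π))⁻¹
  convert h using 1
  funext x
  rw [qar_aux_gauss_pdf_eq]; ring

lemma qar_aux_gauss_odd_moment (n : ℕ) (hn : Odd n) :
    ∫ x, x ^ n ∂(gaussianReal 0 1) = 0 := by
  rw [qar_aux_integral_gauss]
  apply qar_aux_odd_integral_zero
  intro x
  rw [qar_aux_gauss_pdf_even, hn.neg_pow]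
  ring

lemma qar_aux_gauss_sq_moment : ∫ x, x ^ 2 ∂(gaussianReal 0 1) = 1 := by
  rw [qar_aux_integral_gauss]
  set c : ℝ := (Real.sqrt (2*π))⁻¹ with hc
  have hder : ∀ x : ℝ, HasDerivAt (fun x : ℝ => -(c * (x * rexp (-x^2/2))))
      (gaussianPDFReal 0 1 x * x ^ 2 - gaussianPDFReal 0 1 x) x := by
    intro x
    have h1 : HasDerivAt (fun x : ℝ => -x^2/2) (-x) x := by
      have := (hasDerivAt_pow 2 x).neg.div_const 2
      refine this.congr_deriv ?_
      push_cast
      ring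
    have h2 := h1.exp
    have h3 := ((hasDerivAt_id x).mul h2).const_mul c
    have h4 := h3.neg
    refine h4.congr_deriv ?_
    rw [qar_aux_gauss_pdf_eq]
    simp only [id_eq]
    ring
  have hint1 : Integrable (fun x => gaussianPDFReal 0 1 x * x ^ 2 - gaussianPDFReal 0 1 x) :=
    (qar_aux_int_pdf_mul_pow 2).sub (by simpa using qar_aux_int_pdf_mul_pow 0)
  have hintF : Integrable (fun x : ℝ => -(c * (x * rexp (-x^2/2)))) := by
    have heq : (fun x : ℝ => -(c * (x * rexp (-x^2/2))))
        = fun x => (-c) * (x^1 * rexp (-x^2/2)) := by funext x; ring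
    rw [heq]
    exact (qar_aux_int_pow_exp_half 1).const_mul (-c)
  have h0 := integral_eq_zero_of_hasDerivAt_of_integrable hder hint1 hintF
  rw [integral_sub (qar_aux_int_pdf_mul_pow 2)
    (by simpa using qar_aux_int_pdf_mul_pow 0)] at h0
  have h1 : ∫ x, gaussianPDFReal 0 1 x = 1 := integral_gaussianPDFReal_eq_one 0 one_ne_zero
  rw [sub_eq_zero.mp h0]
  simpa using h1

lemma qarS_closed (φ1 σ s0 : ℝ) (u : ℕ → ℝ) (k : ℕ) :
    qarS φ1 σ s0 u k
      = φ1 ^ (k+1) * s0 + ∑ j ∈ Finset.range (k+1), φ1 ^ (k-j) * σ * u j := by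
  induction k with
  | zero => simp [qarS]
  | succ k ih =>
      rw [show qarS φ1 σ s0 u (k+1) = φ1 * qarS φ1 σ s0 u k + σ * u (k+1) from rfl, ih]
      rw [Finset.sum_range_succ (n := k+1)]
      have h1 : ∀ j ∈ Finset.range (k+1),
          φ1 ^ (k+1-j) * σ * u j = φ1 * (φ1 ^ (k-j) * σ * u j) := by
        intro j hj
        have hj' : j ≤ k := Nat.lt_succ_iff.mp (Finset.mem_range.mp hj)
        have : k + 1 - j = (k - j) + 1 := by omega
        rw [this, pow_succ]
        ring
      rw [Finset.sum_congr rfl h1, ← Finset.mul_sum]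
      simp only [Nat.sub_self, pow_zero]
      ring

lemma qar_expand_sq_mul (a S u0 : ℝ) (r : Finset ℕ) (c u : ℕ → ℝ) :
    (a * S + ∑ j ∈ r, c j * u j)^2 * u0
      = a^2 * (S^2 * u0) + (∑ j ∈ r, (2*a*c j) * (S * (u j * u0)))
        + ∑ j ∈ r, ∑ l ∈ r, (c j * c l) * (u j * u l * u0) := by
  set T := ∑ j ∈ r, c j * u j with hT
  have h1 : (∑ j ∈ r, (2*a*c j) * (S * (u j * u0))) = 2*a*S*u0*T := by
    rw [hT, Finset.mul_sum]
    exact Finset.sum_congr rfl fun j _ => by ring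
  have h2 : (∑ j ∈ r, ∑ l ∈ r, (c j * c l) * (u j * u l * u0)) = T^2*u0 := by
    rw [hT, sq, Finset.sum_mul_sum, Finset.sum_mul]
    refine Finset.sum_congr rfl fun j _ => ?_
    rw [Finset.sum_mul]
    exact Finset.sum_congr rfl fun l _ => by ring
  rw [h1, h2]
  ring

section UMoments

set_option linter.unusedSectionVars false

variable {Ω : Type*} [MeasurableSpace Ω] {P : Measure Ω} [IsProbabilityMeasure P]
  {U : ℕ → Ω → ℝ}

lemma qar_U_pow_int (hUmeas : ∀ k, Measurable (U k))
    (hUdist : ∀ k, Measure.map (U k) P = gaussianReal 0 1) (k n : ℕ) :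
    Integrable (fun ω => U k ω ^ n) P := by
  have h1 : Integrable (fun x : ℝ => x ^ n) (gaussianReal 0 1) :=
    qar_aux_integrable_gauss _ (qar_aux_int_pdf_mul_pow n)
  rw [← hUdist k] at h1
  exact (integrable_map_measure ((measurable_id'.pow_const n).aestronglyMeasurable)
    (hUmeas k).aemeasurable).mp h1

lemma qar_U_pow_integral (hUmeas : ∀ k, Measurable (U k))
    (hUdist : ∀ k, Measure.map (U k) P = gaussianReal 0 1) (k n : ℕ) :
    ∫ ω, U k ω ^ n ∂P = ∫ x, x ^ n ∂(gaussianReal 0 1) := by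
  rw [← hUdist k, integral_map (hUmeas k).aemeasurable
    ((measurable_id'.pow_const n).aestronglyMeasurable)]

lemma qar_U_int (hUmeas : ∀ k, Measurable (U k))
    (hUdist : ∀ k, Measure.map (U k) P = gaussianReal 0 1) (k : ℕ) :
    Integrable (U k) P := by
  have := qar_U_pow_int hUmeas hUdist k 1
  simpa using this

lemma qar_U_mean (hUmeas : ∀ k, Measurable (U k))
    (hUdist : ∀ k, Measure.map (U k) P = gaussianReal 0 1) (k : ℕ) :
    ∫ ω, U k ω ∂P = 0 := by
  have h1 := qar_U_pow_integral hUmeas hUdist k 1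
  have h2 := qar_aux_gauss_odd_moment 1 odd_one
  simp only [pow_one] at h1 h2
  rw [h1, h2]

lemma qar_U_sq_mean (hUmeas : ∀ k, Measurable (U k))
    (hUdist : ∀ k, Measure.map (U k) P = gaussianReal 0 1) (k : ℕ) :
    ∫ ω, U k ω ^ 2 ∂P = 1 := by
  rw [qar_U_pow_integral hUmeas hUdist k 2, qar_aux_gauss_sq_moment]

lemma qar_U_cube_mean (hUmeas : ∀ k, Measurable (U k))
    (hUdist : ∀ k, Measure.map (U k) P = gaussianReal 0 1) (k : ℕ) :
    ∫ ω, U k ω ^ 3 ∂P = 0 := by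
  rw [qar_U_pow_integral hUmeas hUdist k 3, qar_aux_gauss_odd_moment 3 (by decide)]

variable (hUmeas : ∀ k, Measurable (U k))
  (hUdist : ∀ k, Measure.map (U k) P = gaussianReal 0 1)
  (hUindep : iIndepFun U P)
include hUmeas hUdist hUindep

lemma qar_UU_int (i j : ℕ) : Integrable (fun ω => U i ω * U j ω) P := by
  by_cases hij : i = j
  · subst hij
    have := qar_U_pow_int hUmeas hUdist i 2
    simpa [pow_two] using this
  · exact (hUindep.indepFun hij).integrable_mul (qar_U_int hUmeas hUdist i)
      (qar_U_int hUmeas hUdist j)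

lemma qar_UU_mean (i j : ℕ) :
    ∫ ω, U i ω * U j ω ∂P = if i = j then 1 else 0 := by
  by_cases hij : i = j
  · subst hij
    simp only [if_pos rfl]
    have := qar_U_sq_mean hUmeas hUdist i
    simpa [pow_two] using this
  · rw [if_neg hij]
    have h := (hUindep.indepFun hij).integral_mul_eq_mul_integral
      (hUmeas i).aestronglyMeasurable (hUmeas j).aestronglyMeasurable
    calc ∫ ω, U i ω * U j ω ∂P = ∫ ω, (U i * U j) ω ∂P := rfl
      _ = (∫ ω, U i ω ∂P) * ∫ ω, U j ω ∂P := h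
      _ = 0 := by rw [qar_U_mean hUmeas hUdist, zero_mul]

lemma qar_UUU_int (i j : ℕ) : Integrable (fun ω => U i ω * U j ω * U 0 ω) P := by
  by_cases hi : i = 0 <;> by_cases hj : j = 0
  · subst hi; subst hj
    have e : (fun ω => U 0 ω * U 0 ω * U 0 ω) = fun ω => U 0 ω ^ 3 := by
      funext ω; ring
    rw [e]; exact qar_U_pow_int hUmeas hUdist 0 3
  · subst hi
    have hInd : IndepFun (U 0 * U 0) (U j) P :=
      hUindep.indepFun_mul_left hUmeas 0 0 j (Ne.symm hj) (Ne.symm hj)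
    have h := hInd.integrable_mul (qar_UU_int hUmeas hUdist hUindep 0 0)
      (qar_U_int hUmeas hUdist j)
    have e : (fun ω => U 0 ω * U j ω * U 0 ω) = (U 0 * U 0) * U j := by
      funext ω; show _ = U 0 ω * U 0 ω * U j ω; ring
    rw [e]; exact h
  · subst hj
    have hInd : IndepFun (U 0 * U 0) (U i) P :=
      hUindep.indepFun_mul_left hUmeas 0 0 i (Ne.symm hi) (Ne.symm hi)
    have h := hInd.integrable_mul (qar_UU_int hUmeas hUdist hUindep 0 0)
      (qar_U_int hUmeas hUdist i)
    have e : (fun ω => U i ω * U 0 ω * U 0 ω) = (U 0 * U 0) * U i := by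
      funext ω; show _ = U 0 ω * U 0 ω * U i ω; ring
    rw [e]; exact h
  · have hInd : IndepFun (U i * U j) (U 0) P :=
      hUindep.indepFun_mul_left hUmeas i j 0 hi hj
    exact hInd.integrable_mul (qar_UU_int hUmeas hUdist hUindep i j)
      (qar_U_int hUmeas hUdist 0)

lemma qar_UUU_mean (i j : ℕ) : ∫ ω, U i ω * U j ω * U 0 ω ∂P = 0 := by
  by_cases hi : i = 0 <;> by_cases hj : j = 0
  · subst hi; subst hj
    have e : (fun ω => U 0 ω * U 0 ω * U 0 ω) = fun ω => U 0 ω ^ 3 := by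
      funext ω; ring
    rw [e]; exact qar_U_cube_mean hUmeas hUdist 0
  · subst hi
    have hInd : IndepFun (U 0 * U 0) (U j) P :=
      hUindep.indepFun_mul_left hUmeas 0 0 j (Ne.symm hj) (Ne.symm hj)
    have h := hInd.integral_mul_eq_mul_integral ((hUmeas 0).mul (hUmeas 0)).aestronglyMeasurable
      (hUmeas j).aestronglyMeasurable
    have e : (fun ω => U 0 ω * U j ω * U 0 ω) = (U 0 * U 0) * U j := by
      funext ω; show _ = U 0 ω * U 0 ω * U j ω; ring
    rw [e]
    calc ∫ ω, ((U 0 * U 0) * U j) ω ∂P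
        = (∫ ω, (U 0 * U 0) ω ∂P) * ∫ ω, U j ω ∂P := h
      _ = 0 := by rw [qar_U_mean hUmeas hUdist j, mul_zero]
  · subst hj
    have hInd : IndepFun (U 0 * U 0) (U i) P :=
      hUindep.indepFun_mul_left hUmeas 0 0 i (Ne.symm hi) (Ne.symm hi)
    have h := hInd.integral_mul_eq_mul_integral ((hUmeas 0).mul (hUmeas 0)).aestronglyMeasurable
      (hUmeas i).aestronglyMeasurable
    have e : (fun ω => U i ω * U 0 ω * U 0 ω) = (U 0 * U 0) * U i := by
      funext ω; show _ = U 0 ω * U 0 ω * U i ω; ring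
    rw [e]
    calc ∫ ω, ((U 0 * U 0) * U i) ω ∂P
        = (∫ ω, (U 0 * U 0) ω ∂P) * ∫ ω, U i ω ∂P := h
      _ = 0 := by rw [qar_U_mean hUmeas hUdist i, mul_zero]
  · have hInd : IndepFun (U i * U j) (U 0) P :=
      hUindep.indepFun_mul_left hUmeas i j 0 hi hj
    have h := hInd.integral_mul_eq_mul_integral ((hUmeas i).mul (hUmeas j)).aestronglyMeasurable
      (hUmeas 0).aestronglyMeasurable
    calc ∫ ω, U i ω * U j ω * U 0 ω ∂P
        = (∫ ω, (U i * U j) ω ∂P) * ∫ ω, U 0 ω ∂P := h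
      _ = 0 := by rw [qar_U_mean hUmeas hUdist 0, mul_zero]

end UMoments

/-- Let `Ym, Sm` be random initial values with `E[Sm] = 0`,
`E[Sm²] < ∞`, `E[|Ym|] < ∞`, and let `U 0, U 1, …` be i.i.d. standard Gaussian shocks
independent of the pair `(Ym, Sm)`.  If `y_h` is produced by the QAR(1,1) recursion
started at `s₋₁ = Sm`, `y₋₁ = Ym` with inputs `u_k = U k`, then
`E[y_h · U 0] = σ φ₁^h`: the population coefficient of a linear local projection of
`y_h` on the observed shock `U 0` (which has unit variance) coincides with the
impulse response of the linear AR(1) model `y_t = φ₁ y_{t-1} + σ u_t`, so the linear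
local projection captures none of the nonlinearity of the QAR(1,1) model. -/
theorem qar_linear_lp_fails
    {Ω : Type*} [MeasurableSpace Ω] (P : Measure Ω) [IsProbabilityMeasure P]
    (φ1 φ2 γ σ : ℝ) (hφ1 : |φ1| < 1) (h : ℕ) (hh : 1 ≤ h)
    (Ym Sm : Ω → ℝ) (hYmeas : Measurable Ym) (hSmeas : Measurable Sm)
    (hSmean : ∫ ω, Sm ω ∂P = 0)
    (hS2 : Integrable (fun ω => (Sm ω) ^ 2) P)
    (hYint : Integrable Ym P)
    (U : ℕ → Ω → ℝ)
    (hUmeas : ∀ k, Measurable (U k))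
    (hUdist : ∀ k, Measure.map (U k) P = gaussianReal 0 1)
    (hUindep : iIndepFun U P)
    (hindep : IndepFun (fun ω => (Ym ω, Sm ω)) (fun ω (k : ℕ) => U k ω) P) :
    ∫ ω, qarY φ1 φ2 γ σ (Sm ω) (Ym ω) (fun k => U k ω) h * U 0 ω ∂P
      = σ * φ1 ^ h := by
  -- integrability of Sm
  have hSm_int : Integrable Sm P :=
    ((memLp_two_iff_integrable_sq hSmeas.aestronglyMeasurable).mpr hS2).integrable one_le_two
  -- mixed independences
  have iYU : IndepFun Ym (U 0) P :=
    hindep.comp measurable_fst (measurable_pi_apply 0)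
  have iS2U : IndepFun (fun ω => Sm ω ^ 2) (U 0) P :=
    hindep.comp (measurable_snd.pow_const 2) (measurable_pi_apply 0)
  have iSUU : ∀ i : ℕ, IndepFun Sm (fun ω => U i ω * U 0 ω) P := fun i =>
    hindep.comp measurable_snd ((measurable_pi_apply i).mul (measurable_pi_apply 0))
  -- mixed integrability
  have intYU : Integrable (fun ω => Ym ω * U 0 ω) P :=
    iYU.integrable_mul hYint (qar_U_int hUmeas hUdist 0)
  have intS2U : Integrable (fun ω => Sm ω ^ 2 * U 0 ω) P :=
    iS2U.integrable_mul hS2 (qar_U_int hUmeas hUdist 0)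
  have intSUU : ∀ i : ℕ, Integrable (fun ω => Sm ω * (U i ω * U 0 ω)) P := fun i =>
    (iSUU i).integrable_mul hSm_int (qar_UU_int hUmeas hUdist hUindep i 0)
  -- mixed means
  have meanYU : ∫ ω, Ym ω * U 0 ω ∂P = 0 := by
    calc ∫ ω, Ym ω * U 0 ω ∂P
        = (∫ ω, Ym ω ∂P) * ∫ ω, U 0 ω ∂P :=
          iYU.integral_mul_eq_mul_integral hYmeas.aestronglyMeasurable (hUmeas 0).aestronglyMeasurable
      _ = 0 := by rw [qar_U_mean hUmeas hUdist 0, mul_zero]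
  have meanS2U : ∫ ω, Sm ω ^ 2 * U 0 ω ∂P = 0 := by
    calc ∫ ω, Sm ω ^ 2 * U 0 ω ∂P
        = (∫ ω, Sm ω ^ 2 ∂P) * ∫ ω, U 0 ω ∂P :=
          iS2U.integral_mul_eq_mul_integral (hSmeas.pow_const 2).aestronglyMeasurable
            (hUmeas 0).aestronglyMeasurable
      _ = 0 := by rw [qar_U_mean hUmeas hUdist 0, mul_zero]
  have meanSUU : ∀ i : ℕ, ∫ ω, Sm ω * (U i ω * U 0 ω) ∂P = 0 := by
    intro i
    calc ∫ ω, Sm ω * (U i ω * U 0 ω) ∂P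
        = (∫ ω, Sm ω ∂P) * ∫ ω, U i ω * U 0 ω ∂P :=
          (iSUU i).integral_mul_eq_mul_integral hSmeas.aestronglyMeasurable
            ((hUmeas i).mul (hUmeas 0)).aestronglyMeasurable
      _ = 0 := by rw [hSmean, zero_mul]
  -- the s-process times U i * U 0
  have SUU : ∀ k i : ℕ,
      Integrable (fun ω => qarS φ1 σ (Sm ω) (fun m => U m ω) k * (U i ω * U 0 ω)) P ∧
      ∫ ω, qarS φ1 σ (Sm ω) (fun m => U m ω) k * (U i ω * U 0 ω) ∂P = 0 := by
    intro k i
    have e : (fun ω => qarS φ1 σ (Sm ω) (fun m => U m ω) k * (U i ω * U 0 ω))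
        = fun ω => φ1^(k+1) * (Sm ω * (U i ω * U 0 ω))
          + ∑ j ∈ Finset.range (k+1), (φ1^(k-j) * σ) * (U j ω * U i ω * U 0 ω) := by
      funext ω
      rw [qarS_closed, add_mul, Finset.sum_mul]
      congr 1
      · ring
      · exact Finset.sum_congr rfl fun j _ => by ring
    have I1 : Integrable (fun ω => φ1^(k+1) * (Sm ω * (U i ω * U 0 ω))) P :=
      (intSUU i).const_mul _
    have I2 : Integrable (fun ω =>
        ∑ j ∈ Finset.range (k+1), (φ1^(k-j) * σ) * (U j ω * U i ω * U 0 ω)) P :=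
      integrable_finset_sum _ fun j _ =>
        (qar_UUU_int hUmeas hUdist hUindep j i).const_mul _
    constructor
    · rw [e]; exact I1.add I2
    · rw [e, integral_add I1 I2, integral_const_mul, meanSUU i, mul_zero, zero_add,
        integral_finset_sum _ (fun j _ =>
          (qar_UUU_int hUmeas hUdist hUindep j i).const_mul _)]
      refine Finset.sum_eq_zero fun j _ => ?_
      rw [integral_const_mul, qar_UUU_mean hUmeas hUdist hUindep j i, mul_zero]
  -- the squared s-process times U 0
  have S2U : ∀ k : ℕ,
      Integrable (fun ω => qarS φ1 σ (Sm ω) (fun m => U m ω) k ^ 2 * U 0 ω) P ∧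
      ∫ ω, qarS φ1 σ (Sm ω) (fun m => U m ω) k ^ 2 * U 0 ω ∂P = 0 := by
    intro k
    have e : (fun ω => qarS φ1 σ (Sm ω) (fun m => U m ω) k ^ 2 * U 0 ω)
        = fun ω => (φ1^(k+1))^2 * (Sm ω ^ 2 * U 0 ω)
          + (∑ j ∈ Finset.range (k+1),
              (2 * φ1^(k+1) * (φ1^(k-j) * σ)) * (Sm ω * (U j ω * U 0 ω)))
          + ∑ j ∈ Finset.range (k+1), ∑ l ∈ Finset.range (k+1),
              ((φ1^(k-j) * σ) * (φ1^(k-l) * σ)) * (U j ω * U l ω * U 0 ω) := by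
      funext ω
      rw [qarS_closed]
      exact qar_expand_sq_mul (φ1^(k+1)) (Sm ω) (U 0 ω) (Finset.range (k+1))
        (fun j => φ1^(k-j) * σ) (fun m => U m ω)
    have I1 : Integrable (fun ω => (φ1^(k+1))^2 * (Sm ω ^ 2 * U 0 ω)) P :=
      intS2U.const_mul _
    have I2 : Integrable (fun ω => ∑ j ∈ Finset.range (k+1),
        (2 * φ1^(k+1) * (φ1^(k-j) * σ)) * (Sm ω * (U j ω * U 0 ω))) P :=
      integrable_finset_sum _ fun j _ => (intSUU j).const_mul _
    have I3 : Integrable (fun ω => ∑ j ∈ Finset.range (k+1), ∑ l ∈ Finset.range (k+1),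
        ((φ1^(k-j) * σ) * (φ1^(k-l) * σ)) * (U j ω * U l ω * U 0 ω)) P :=
      integrable_finset_sum _ fun j _ => integrable_finset_sum _ fun l _ =>
        (qar_UUU_int hUmeas hUdist hUindep j l).const_mul _
    have I12 : Integrable (fun ω => (φ1^(k+1))^2 * (Sm ω ^ 2 * U 0 ω)
        + ∑ j ∈ Finset.range (k+1),
            (2 * φ1^(k+1) * (φ1^(k-j) * σ)) * (Sm ω * (U j ω * U 0 ω))) P := I1.add I2
    constructor
    · rw [e]; exact I12.add I3
    · rw [e, integral_add I12 I3, integral_add I1 I2, integral_const_mul,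
        meanS2U, mul_zero, zero_add]
      have hI2 : ∫ ω, (∑ j ∈ Finset.range (k+1),
          (2 * φ1^(k+1) * (φ1^(k-j) * σ)) * (Sm ω * (U j ω * U 0 ω))) ∂P = 0 := by
        rw [integral_finset_sum _ (fun j _ => (intSUU j).const_mul _)]
        refine Finset.sum_eq_zero fun j _ => ?_
        rw [integral_const_mul, meanSUU j, mul_zero]
      have hI3 : ∫ ω, (∑ j ∈ Finset.range (k+1), ∑ l ∈ Finset.range (k+1),
          ((φ1^(k-j) * σ) * (φ1^(k-l) * σ)) * (U j ω * U l ω * U 0 ω)) ∂P = 0 := by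
        rw [integral_finset_sum _ (fun j _ => integrable_finset_sum _ fun l _ =>
          (qar_UUU_int hUmeas hUdist hUindep j l).const_mul _)]
        refine Finset.sum_eq_zero fun j _ => ?_
        rw [integral_finset_sum _ (fun l _ =>
          (qar_UUU_int hUmeas hUdist hUindep j l).const_mul _)]
        refine Finset.sum_eq_zero fun l _ => ?_
        rw [integral_const_mul, qar_UUU_mean hUmeas hUdist hUindep j l, mul_zero]
      rw [hI2, hI3]
      ring
  -- main induction
  have main : ∀ k : ℕ,
      Integrable (fun ω => qarY φ1 φ2 γ σ (Sm ω) (Ym ω) (fun m => U m ω) k * U 0 ω) P ∧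
      ∫ ω, qarY φ1 φ2 γ σ (Sm ω) (Ym ω) (fun m => U m ω) k * U 0 ω ∂P = σ * φ1 ^ k := by
    intro k
    induction k with
    | zero =>
        have e : (fun ω => qarY φ1 φ2 γ σ (Sm ω) (Ym ω) (fun m => U m ω) 0 * U 0 ω)
            = fun ω => φ1 * (Ym ω * U 0 ω) + φ2 * (Sm ω ^ 2 * U 0 ω)
              + σ * (U 0 ω ^ 2) + (γ * σ) * (Sm ω * (U 0 ω * U 0 ω)) := by
          funext ω
          show (φ1 * Ym ω + φ2 * Sm ω ^ 2 + (1 + γ * Sm ω) * σ * U 0 ω) * U 0 ω = _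
          ring
        have I1 : Integrable (fun ω => φ1 * (Ym ω * U 0 ω)) P := intYU.const_mul _
        have I2 : Integrable (fun ω => φ2 * (Sm ω ^ 2 * U 0 ω)) P := intS2U.const_mul _
        have I3 : Integrable (fun ω => σ * (U 0 ω ^ 2)) P :=
          (qar_U_pow_int hUmeas hUdist 0 2).const_mul _
        have I4 : Integrable (fun ω => (γ * σ) * (Sm ω * (U 0 ω * U 0 ω))) P :=
          (intSUU 0).const_mul _
        have I12 : Integrable (fun ω => φ1 * (Ym ω * U 0 ω)
            + φ2 * (Sm ω ^ 2 * U 0 ω)) P := I1.add I2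
        have I123 : Integrable (fun ω => φ1 * (Ym ω * U 0 ω)
            + φ2 * (Sm ω ^ 2 * U 0 ω) + σ * (U 0 ω ^ 2)) P := I12.add I3
        constructor
        · rw [e]; exact I123.add I4
        · rw [e, integral_add I123 I4, integral_add I12 I3,
            integral_add I1 I2, integral_const_mul, integral_const_mul,
            integral_const_mul, integral_const_mul, meanYU, meanS2U,
            qar_U_sq_mean hUmeas hUdist 0, meanSUU 0]
          ring
    | succ k ih =>
        have e : (fun ω => qarY φ1 φ2 γ σ (Sm ω) (Ym ω) (fun m => U m ω) (k+1) * U 0 ω)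
            = fun ω =>
              φ1 * (qarY φ1 φ2 γ σ (Sm ω) (Ym ω) (fun m => U m ω) k * U 0 ω)
              + φ2 * (qarS φ1 σ (Sm ω) (fun m => U m ω) k ^ 2 * U 0 ω)
              + σ * (U (k+1) ω * U 0 ω)
              + (γ * σ) * (qarS φ1 σ (Sm ω) (fun m => U m ω) k * (U (k+1) ω * U 0 ω)) := by
          funext ω
          show (φ1 * qarY φ1 φ2 γ σ (Sm ω) (Ym ω) (fun m => U m ω) k
              + φ2 * qarS φ1 σ (Sm ω) (fun m => U m ω) k ^ 2
              + (1 + γ * qarS φ1 σ (Sm ω) (fun m => U m ω) k) * σ * U (k+1) ω) * U 0 ω = _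
          ring
        have I1 : Integrable (fun ω =>
            φ1 * (qarY φ1 φ2 γ σ (Sm ω) (Ym ω) (fun m => U m ω) k * U 0 ω)) P :=
          ih.1.const_mul _
        have I2 : Integrable (fun ω =>
            φ2 * (qarS φ1 σ (Sm ω) (fun m => U m ω) k ^ 2 * U 0 ω)) P :=
          (S2U k).1.const_mul _
        have I3 : Integrable (fun ω => σ * (U (k+1) ω * U 0 ω)) P :=
          (qar_UU_int hUmeas hUdist hUindep (k+1) 0).const_mul _
        have I4 : Integrable (fun ω => (γ * σ)
            * (qarS φ1 σ (Sm ω) (fun m => U m ω) k * (U (k+1) ω * U 0 ω))) P :=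
          (SUU k (k+1)).1.const_mul _
        have I12 : Integrable (fun ω =>
            φ1 * (qarY φ1 φ2 γ σ (Sm ω) (Ym ω) (fun m => U m ω) k * U 0 ω)
            + φ2 * (qarS φ1 σ (Sm ω) (fun m => U m ω) k ^ 2 * U 0 ω)) P := I1.add I2
        have I123 : Integrable (fun ω =>
            φ1 * (qarY φ1 φ2 γ σ (Sm ω) (Ym ω) (fun m => U m ω) k * U 0 ω)
            + φ2 * (qarS φ1 σ (Sm ω) (fun m => U m ω) k ^ 2 * U 0 ω)
            + σ * (U (k+1) ω * U 0 ω)) P := I12.add I3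
        constructor
        · rw [e]; exact I123.add I4
        · rw [e, integral_add I123 I4, integral_add I12 I3,
            integral_add I1 I2, integral_const_mul, integral_const_mul,
            integral_const_mul, integral_const_mul, ih.2, (S2U k).2, (SUU k (k+1)).2,
            qar_UU_mean hUmeas hUdist hUindep (k+1) 0, if_neg (Nat.succ_ne_zero k)]
          ring
  exact (main h).2
end

section
/- In the shock-conditional setting, for every δ ∈ ℝ the losses are ranked as L_Feas(δ) ≤ L_Lag(δ) ≤ L_Lin(δ) and L_Feas(δ) ≤ L_Asym(δ); moreover the gains satisfy L_Lin(δ) − L_Lag(δ) = a² δ² · Cov(S, Y′)²/Var(Y′) and L_Lin(δ) − L_Asym(δ) = q² (2 m |δ|³ − m² δ²). -/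
open MeasureTheory ProbabilityTheory

private lemma sq_affine_integral {Ω : Type*} [MeasurableSpace Ω] (P : Measure Ω)
    [IsProbabilityMeasure P]
    (X : Ω → ℝ) (hX : MemLp X 2 P) (b c : ℝ) :
    ∫ ω, (b * X ω + c) ^ 2 ∂P
      = b ^ 2 * (∫ ω, X ω ^ 2 ∂P) + 2 * b * c * (∫ ω, X ω ∂P) + c ^ 2 := by
  have hXi : Integrable X P := hX.integrable one_le_two
  have hX2 : Integrable (fun ω => X ω ^ 2) P := hX.integrable_sq
  have h1 : ∀ ω, (b * X ω + c) ^ 2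
      = b ^ 2 * X ω ^ 2 + (2 * b * c) * X ω + c ^ 2 := by intro ω; ring
  simp only [h1]
  have hA : Integrable (fun ω => b ^ 2 * X ω ^ 2 + (2 * b * c) * X ω) P :=
    (hX2.const_mul _).add (hXi.const_mul _)
  rw [integral_add hA (integrable_const _),
    integral_add (hX2.const_mul _) (hXi.const_mul _),
    MeasureTheory.integral_const_mul, MeasureTheory.integral_const_mul, integral_const]
  simp [measure_univ]

/-- Shock-conditional ranking.  With `S, Y'` square-integrable,
`E[S] = 0`, `Var(Y') > 0`, `λ = Cov(S,Y')/Var(Y')`, `W = S − λ(Y' − E[Y'])` and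
`m = √(2/π)/(1 − 2/π)`, the shock-conditional losses satisfy, for the fixed shock `δ`,
`L_Feas(δ) ≤ L_Lag(δ) ≤ L_Lin(δ)` and `L_Feas(δ) ≤ L_Asym(δ)`; moreover
`L_Lin(δ) − L_Lag(δ) = a²δ²·Cov(S,Y')²/Var(Y')` and
`L_Lin(δ) − L_Asym(δ) = q²(2m|δ|³ − m²δ²)`. -/
theorem shock_conditional_mse_ranking
    {Ω : Type*} [MeasurableSpace Ω] (P : Measure Ω) [IsProbabilityMeasure P]
    (S Y' : Ω → ℝ) (hSmeas : Measurable S) (hY'meas : Measurable Y')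
    (hS2 : MemLp S 2 P) (hY'2 : MemLp Y' 2 P)
    (hSmean : ∫ ω, S ω ∂P = 0)
    (hY'var : 0 < (∫ ω, (Y' ω) ^ 2 ∂P) - (∫ ω, Y' ω ∂P) ^ 2)
    (a q δ : ℝ) :
    let covSY : ℝ := (∫ ω, S ω * Y' ω ∂P) - (∫ ω, S ω ∂P) * (∫ ω, Y' ω ∂P)
    let varY : ℝ := (∫ ω, (Y' ω) ^ 2 ∂P) - (∫ ω, Y' ω ∂P) ^ 2
    let lam : ℝ := covSY / varY
    let W : Ω → ℝ := fun ω => S ω - lam * (Y' ω - ∫ ω', Y' ω' ∂P)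
    let m : ℝ := Real.sqrt (2 / Real.pi) / (1 - 2 / Real.pi)
    let LLin : ℝ := ∫ ω, (a * S ω * δ + q * δ ^ 2) ^ 2 ∂P
    let LLag : ℝ := ∫ ω, (a * W ω * δ + q * δ ^ 2) ^ 2 ∂P
    let LFeas : ℝ := ∫ ω, (a * W ω * δ) ^ 2 ∂P
    let LAsym : ℝ := ∫ ω, (a * S ω * δ + q * (δ ^ 2 - m * |δ|)) ^ 2 ∂P
    LFeas ≤ LLag
    ∧ LLag ≤ LLin
    ∧ LFeas ≤ LAsym
    ∧ LLin - LLag = a ^ 2 * δ ^ 2 * (covSY ^ 2 / varY)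
    ∧ LLin - LAsym = q ^ 2 * (2 * m * |δ| ^ 3 - m ^ 2 * δ ^ 2) := by
  intro covSY varY lam W m LLin LLag LFeas LAsym
  have hv : (0:ℝ) < varY := hY'var
  have hvne : varY ≠ 0 := ne_of_gt hv
  have hSint : Integrable S P := hS2.integrable one_le_two
  have hYint : Integrable Y' P := hY'2.integrable one_le_two
  have hSsq : Integrable (fun ω => S ω ^ 2) P := hS2.integrable_sq
  have hYsq : Integrable (fun ω => Y' ω ^ 2) P := hY'2.integrable_sq
  have hSY : Integrable (fun ω => S ω * Y' ω) P := by
    refine ((hSsq.add hYsq).const_mul (1/2 : ℝ)).mono'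
      (hSmeas.mul hY'meas).aestronglyMeasurable ?_
    filter_upwards with ω
    rw [Real.norm_eq_abs, abs_mul]
    simp only [Pi.add_apply]
    nlinarith [sq_nonneg (|S ω| - |Y' ω|), sq_abs (S ω), sq_abs (Y' ω),
      abs_nonneg (S ω), abs_nonneg (Y' ω)]
  set μY : ℝ := ∫ ω', Y' ω' ∂P with hμY
  have hWm : MemLp W 2 P :=
    hS2.sub ((hY'2.sub (memLp_const μY)).const_mul lam)
  have hWmean : ∫ ω, W ω ∂P = 0 := by
    show ∫ ω, (S ω - lam * (Y' ω - μY)) ∂P = 0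
    have hi : Integrable (fun ω => lam * (Y' ω - μY)) P :=
      (hYint.sub (integrable_const μY)).const_mul lam
    rw [integral_sub hSint hi,
      MeasureTheory.integral_const_mul,
      integral_sub hYint (integrable_const _), integral_const]
    simp [hSmean, hμY]
  have hcov : ∫ ω, S ω * Y' ω ∂P = covSY := by
    simp [covSY, hSmean]
  have hYsqint : ∫ ω, Y' ω ^ 2 ∂P = varY + μY ^ 2 := by
    simp only [varY]; ring
  have hσW : ∫ ω, W ω ^ 2 ∂P = (∫ ω, S ω ^ 2 ∂P) - covSY ^ 2 / varY := by
    have hexp : ∀ ω, W ω ^ 2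
        = S ω ^ 2 + (-(2*lam)) * (S ω * Y' ω) + (2*lam*μY) * S ω
          + lam^2 * Y' ω ^ 2 + (-(2*lam^2*μY)) * Y' ω + lam^2*μY^2 := by
      intro ω
      show (S ω - lam * (Y' ω - μY)) ^ 2 = _
      ring
    simp only [hexp]
    have h12 : Integrable (fun ω => S ω ^ 2 + (-(2*lam)) * (S ω * Y' ω)) P :=
      hSsq.add (hSY.const_mul _)
    have h123 : Integrable
        (fun ω => S ω ^ 2 + (-(2*lam)) * (S ω * Y' ω) + (2*lam*μY) * S ω) P :=
      h12.add (hSint.const_mul _)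
    have h1234 : Integrable (fun ω => S ω ^ 2 + (-(2*lam)) * (S ω * Y' ω)
        + (2*lam*μY) * S ω + lam^2 * Y' ω ^ 2) P := h123.add (hYsq.const_mul _)
    have h12345 : Integrable (fun ω => S ω ^ 2 + (-(2*lam)) * (S ω * Y' ω)
        + (2*lam*μY) * S ω + lam^2 * Y' ω ^ 2 + (-(2*lam^2*μY)) * Y' ω) P :=
      h1234.add (hYint.const_mul _)
    rw [integral_add h12345 (integrable_const _),
      integral_add h1234 (hYint.const_mul _),
      integral_add h123 (hYsq.const_mul _),
      integral_add h12 (hSint.const_mul _),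
      integral_add hSsq (hSY.const_mul _),
      MeasureTheory.integral_const_mul, MeasureTheory.integral_const_mul,
      MeasureTheory.integral_const_mul, MeasureTheory.integral_const_mul,
      integral_const]
    rw [hcov, hYsqint, hSmean, ← hμY]
    simp only [measure_univ, probReal_univ, ENNReal.toReal_one, one_smul, mul_zero, add_zero]
    have hlam : lam = covSY / varY := rfl
    rw [hlam]
    field_simp
    ring
  have hσSnn : 0 ≤ ∫ ω, S ω ^ 2 ∂P := integral_nonneg fun ω => sq_nonneg _
  have hσWnn : 0 ≤ ∫ ω, W ω ^ 2 ∂P := integral_nonneg fun ω => sq_nonneg _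
  have hcovnn : 0 ≤ covSY ^ 2 / varY := div_nonneg (sq_nonneg _) (le_of_lt hv)
  -- closed forms of the four losses
  have hLLin : LLin = (a*δ)^2 * (∫ ω, S ω ^ 2 ∂P) + (q*δ^2)^2 := by
    have h : LLin = ∫ ω, ((a*δ) * S ω + q*δ^2) ^ 2 ∂P := by
      show (∫ ω, (a * S ω * δ + q * δ ^ 2) ^ 2 ∂P) = _
      congr 1; funext ω; ring
    rw [h, sq_affine_integral P S hS2, hSmean]; ring
  have hLLag : LLag = (a*δ)^2 * (∫ ω, W ω ^ 2 ∂P) + (q*δ^2)^2 := by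
    have h : LLag = ∫ ω, ((a*δ) * W ω + q*δ^2) ^ 2 ∂P := by
      show (∫ ω, (a * W ω * δ + q * δ ^ 2) ^ 2 ∂P) = _
      congr 1; funext ω; ring
    rw [h, sq_affine_integral P W hWm, hWmean]; ring
  have hLFeas : LFeas = (a*δ)^2 * (∫ ω, W ω ^ 2 ∂P) := by
    have h : LFeas = ∫ ω, ((a*δ) * W ω + 0) ^ 2 ∂P := by
      show (∫ ω, (a * W ω * δ) ^ 2 ∂P) = _
      congr 1; funext ω; ring
    rw [h, sq_affine_integral P W hWm, hWmean]; ring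
  have hLAsym : LAsym = (a*δ)^2 * (∫ ω, S ω ^ 2 ∂P) + (q*(δ^2 - m*|δ|))^2 := by
    have h : LAsym = ∫ ω, ((a*δ) * S ω + q*(δ^2 - m*|δ|)) ^ 2 ∂P := by
      show (∫ ω, (a * S ω * δ + q * (δ ^ 2 - m * |δ|)) ^ 2 ∂P) = _
      congr 1; funext ω; ring
    rw [h, sq_affine_integral P S hS2, hSmean]; ring
  have habs : |δ| ^ 2 = δ ^ 2 := sq_abs δ
  refine ⟨?_, ?_, ?_, ?_, ?_⟩
  · rw [hLFeas, hLLag]; nlinarith [sq_nonneg (q*δ^2)]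
  · rw [hLLag, hLLin]; nlinarith [sq_nonneg (a*δ), hcovnn, hσW]
  · rw [hLFeas, hLAsym]
    nlinarith [sq_nonneg (q*(δ^2 - m*|δ|)), sq_nonneg (a*δ), hcovnn, hσW]
  · rw [hLLin, hLLag, hσW]; ring
  · rw [hLLin, hLAsym, ← habs]
    ring
end

section
/- In the shock-conditional setting, assume q ≠ 0. Then L_Asym(δ) ≤ L_Lin(δ) if and only if |δ| ≥ m/2 (with equality exactly when |δ| ∈ {0, m/2}); the gain satisfies L_Lin(δ) − L_Asym(δ) = q² m δ² (2|δ| − m); and the function t ↦ q² m t² (2t − m) is strictly increasing on [m/2, ∞), so the gain of the shock-based specification over the linear specification grows with the shock magnitude once |δ| exceeds the threshold m/2. -/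
open MeasureTheory ProbabilityTheory

/-- Shock-conditional comparison of the shock-based and linear
specifications, for `q ≠ 0`.  With the losses of the shock-conditional setting,
`L_Asym(δ) ≤ L_Lin(δ)` if and only if `|δ| ≥ m/2` (for `δ ≠ 0`; equality holds exactly
when `|δ| ∈ {0, m/2}`); the gain satisfies
`L_Lin(δ) − L_Asym(δ) = q² m δ² (2|δ| − m)`; and `t ↦ q² m t² (2t − m)` is strictly
increasing on `[m/2, ∞)`, so the gain of the shock-based specification over the linear
one grows with the shock magnitude once `|δ|` exceeds the threshold `m/2`. -/
theorem asymlp_gain_threshold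
    {Ω : Type*} [MeasurableSpace Ω] (P : Measure Ω) [IsProbabilityMeasure P]
    (S Y' : Ω → ℝ) (hSmeas : Measurable S) (hY'meas : Measurable Y')
    (hS2 : MemLp S 2 P) (hY'2 : MemLp Y' 2 P)
    (hSmean : ∫ ω, S ω ∂P = 0)
    (hY'var : 0 < (∫ ω, (Y' ω) ^ 2 ∂P) - (∫ ω, Y' ω ∂P) ^ 2)
    (a q δ : ℝ) (hq : q ≠ 0) :
    let m : ℝ := Real.sqrt (2 / Real.pi) / (1 - 2 / Real.pi)
    let LLin : ℝ := ∫ ω, (a * S ω * δ + q * δ ^ 2) ^ 2 ∂P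
    let LAsym : ℝ := ∫ ω, (a * S ω * δ + q * (δ ^ 2 - m * |δ|)) ^ 2 ∂P
    LLin - LAsym = q ^ 2 * m * δ ^ 2 * (2 * |δ| - m)
    ∧ (δ ≠ 0 → (LAsym ≤ LLin ↔ m / 2 ≤ |δ|))
    ∧ (LAsym = LLin ↔ |δ| = 0 ∨ |δ| = m / 2)
    ∧ StrictMonoOn (fun t : ℝ => q ^ 2 * m * t ^ 2 * (2 * t - m)) (Set.Ici (m / 2)) := by
  have hm0 : 0 < Real.sqrt (2 / Real.pi) / (1 - 2 / Real.pi) := by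
    have hpi : (3:ℝ) < Real.pi := Real.pi_gt_three
    have h1 : (2:ℝ) / Real.pi < 1 := by
      rw [div_lt_one Real.pi_pos]; linarith
    have h2 : 0 < Real.sqrt (2 / Real.pi) :=
      Real.sqrt_pos.mpr (by positivity)
    exact div_pos h2 (by linarith)
  intro m LLin LAsym
  have hm : 0 < m := hm0
  -- integrability facts
  have hSint : Integrable S P := hS2.integrable (by norm_num)
  have hS2int : Integrable (fun ω => (S ω) ^ 2) P := by
    have := hS2.integrable_sq
    simpa [sq] using this
  -- key expansion of the loss for a generic constant c
  have key : ∀ c : ℝ, ∫ ω, (a * S ω * δ + c) ^ 2 ∂P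
      = a ^ 2 * δ ^ 2 * (∫ ω, (S ω) ^ 2 ∂P) + c ^ 2 := by
    intro c
    have hfun : (fun ω => (a * S ω * δ + c) ^ 2)
        = fun ω => a ^ 2 * δ ^ 2 * (S ω) ^ 2 + (2 * a * δ * c * S ω + c ^ 2) := by
      funext ω; ring
    have hi1 : Integrable (fun ω => a ^ 2 * δ ^ 2 * (S ω) ^ 2) P := hS2int.const_mul _
    have hi2 : Integrable (fun ω => 2 * a * δ * c * S ω) P := hSint.const_mul _
    have hi3 : Integrable (fun _ : Ω => c ^ 2) P := integrable_const _
    have hi23 : Integrable (fun ω => 2 * a * δ * c * S ω + c ^ 2) P := hi2.add hi3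
    rw [hfun, integral_add hi1 hi23, integral_add hi2 hi3,
      integral_const_mul, integral_const_mul, hSmean]
    simp
  have hL1 : LLin = a ^ 2 * δ ^ 2 * (∫ ω, (S ω) ^ 2 ∂P) + (q * δ ^ 2) ^ 2 := key _
  have hL2 : LAsym = a ^ 2 * δ ^ 2 * (∫ ω, (S ω) ^ 2 ∂P) + (q * (δ ^ 2 - m * |δ|)) ^ 2 := key _
  have hgain : LLin - LAsym = q ^ 2 * m * δ ^ 2 * (2 * |δ| - m) := by
    rw [hL1, hL2]
    have habs : |δ| ^ 2 = δ ^ 2 := sq_abs δ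
    linear_combination (-(q ^ 2 * m ^ 2)) * habs
  have hq2 : 0 < q ^ 2 := by positivity
  refine ⟨hgain, ?_, ?_, ?_⟩
  · intro hδ
    have hδ2 : 0 < δ ^ 2 := by positivity
    have hpos : 0 < q ^ 2 * m * δ ^ 2 := by positivity
    constructor
    · intro h
      have h0 : 0 ≤ q ^ 2 * m * δ ^ 2 * (2 * |δ| - m) := by linarith
      nlinarith
    · intro h
      nlinarith
  · constructor
    · intro h
      have h0 : q ^ 2 * m * δ ^ 2 * (2 * |δ| - m) = 0 := by
        rw [← hgain, h, sub_self]
      rcases mul_eq_zero.mp h0 with h1 | h1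
      · rcases mul_eq_zero.mp h1 with h2 | h2
        · exact absurd h2 (by positivity)
        · left
          have : δ = 0 := by
            have := sq_eq_zero_iff.mp h2
            exact this
          simp [this]
      · right; linarith
    · intro h
      have h0 : LLin - LAsym = 0 := by
        rw [hgain]
        rcases h with h | h
        · have hδ0 : δ ^ 2 = 0 := by rw [← sq_abs, h]; ring
          rw [hδ0]; ring
        · rw [h]; ring
      linarith
  · intro x hx y hy hxy
    simp only [Set.mem_Ici] at hx hy
    have hxpos : 0 < x := lt_of_lt_of_le (by linarith) hx
    have hypos : 0 < y := lt_of_lt_of_le (by linarith) hy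
    have hmul : ∀ t : ℝ, q ^ 2 * m * t ^ 2 * (2 * t - m)
        = (q ^ 2 * m) * (t ^ 2 * (2 * t - m)) := fun t => by ring
    simp only [hmul]
    have hcubic : x ^ 2 * (2 * x - m) < y ^ 2 * (2 * y - m) := by
      nlinarith [mul_pos (sub_pos.mpr hxy) (mul_pos hxpos hypos),
        mul_nonneg (sub_pos.mpr hxy).le (by linarith : (0:ℝ) ≤ 2 * x - m),
        mul_nonneg (sub_pos.mpr hxy).le (by linarith : (0:ℝ) ≤ 2 * y - m),
        sq_nonneg (y - x), mul_pos hxpos hypos]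
    exact mul_lt_mul_of_pos_left hcubic (by positivity)
end

section
/- Let Z be a real random variable with E[Z] = 0 and E[Z²] < ∞, and define the causal weight function ω(u) = Cov(1{Z ≥ u}, Z) = E[Z·1{Z ≥ u}] for u ∈ ℝ. Then ω is Lebesgue integrable on ℝ and ∫_ℝ ω(u) du = E[Z²] = Var(Z). In particular, if Var(Z) = 1 then the causal weights integrate to one. -/
open MeasureTheory ProbabilityTheory

namespace CausalAux

lemma ind_eq (z u : ℝ) :
    (if u ≤ z then (1:ℝ) else 0) - (if u ≤ 0 then 1 else 0)
      = (Set.Ioc (0:ℝ) z).indicator 1 u - (Set.Ioc z (0:ℝ)).indicator 1 u := by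
  simp only [Set.indicator_apply, Set.mem_Ioc, Pi.one_apply]
  by_cases h1 : u ≤ z <;> by_cases h2 : u ≤ 0 <;>
    split_ifs with p q <;>
    simp_all [abs_of_nonneg, abs_of_nonpos, not_le] <;> linarith

lemma abs_ind_eq (z u : ℝ) :
    |(if u ≤ z then (1:ℝ) else 0) - (if u ≤ 0 then 1 else 0)|
      = (Set.Ioc (0:ℝ) z).indicator 1 u + (Set.Ioc z (0:ℝ)).indicator 1 u := by
  simp only [Set.indicator_apply, Set.mem_Ioc, Pi.one_apply]
  by_cases h1 : u ≤ z <;> by_cases h2 : u ≤ 0 <;>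
    split_ifs with p q <;>
    simp_all [abs_of_nonneg, abs_of_nonpos, not_le] <;> linarith

lemma ind_integrable (a b : ℝ) :
    Integrable (fun u => ((Set.Ioc a b).indicator 1 u : ℝ)) volume := by
  rw [integrable_indicator_iff measurableSet_Ioc]
  exact integrableOn_const measure_Ioc_lt_top.ne

lemma ind_integral (a b : ℝ) :
    ∫ u, ((Set.Ioc a b).indicator 1 u : ℝ) = max (b - a) 0 := by
  rw [integral_indicator measurableSet_Ioc]
  simp [Real.volume_Ioc, ENNReal.toReal_ofReal']

lemma integrable_aux (z : ℝ) :
    Integrable (fun u => z * ((if u ≤ z then (1:ℝ) else 0) - (if u ≤ 0 then 1 else 0)))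
      volume := by
  simp only [ind_eq]
  exact ((ind_integrable 0 z).sub (ind_integrable z 0)).const_mul z

lemma integral_aux (z : ℝ) :
    ∫ u, z * ((if u ≤ z then (1:ℝ) else 0) - (if u ≤ 0 then 1 else 0)) = z ^ 2 := by
  simp only [ind_eq]
  rw [integral_const_mul, integral_sub (ind_integrable 0 z) (ind_integrable z 0),
    ind_integral, ind_integral]
  rcases le_total 0 z with h | h <;>
    [rw [max_eq_left (by linarith), max_eq_right (by linarith)];
     rw [max_eq_right (by linarith), max_eq_left (by linarith)]] <;> ring

lemma norm_integral_aux (z : ℝ) :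
    ∫ u, ‖z * ((if u ≤ z then (1:ℝ) else 0) - (if u ≤ 0 then 1 else 0))‖ = z ^ 2 := by
  simp only [norm_mul, Real.norm_eq_abs, abs_ind_eq]
  rw [integral_const_mul, integral_add (ind_integrable 0 z) (ind_integrable z 0),
    ind_integral, ind_integral]
  rcases le_total 0 z with h | h <;>
    [rw [max_eq_left (by linarith), max_eq_right (by linarith), abs_of_nonneg h];
     rw [max_eq_right (by linarith), max_eq_left (by linarith), abs_of_nonpos h]] <;> ring

end CausalAux

/-- Let `Z` be a real random variable with `E[Z] = 0` and
`E[Z²] < ∞`, and define the causal weight function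
`ω(u) = Cov(1{Z ≥ u}, Z) = E[Z·1{Z ≥ u}]`.  Then `ω` is Lebesgue integrable on `ℝ` and
`∫_ℝ ω(u) du = E[Z²]` — which equals `Var(Z)` since `E[Z] = 0`; in particular, if
`Var(Z) = 1` the causal weights integrate to one. -/

theorem causal_weights_integrate_to_variance
    {Ω : Type*} [MeasurableSpace Ω] (P : Measure Ω) [IsProbabilityMeasure P]
    (Z : Ω → ℝ) (hZmeas : Measurable Z)
    (hZint : Integrable Z P)
    (hZ2 : Integrable (fun ω => (Z ω) ^ 2) P)
    (hZmean : ∫ ω, Z ω ∂P = 0) :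
    let w : ℝ → ℝ := fun u => ∫ ω, Z ω * (if u ≤ Z ω then (1 : ℝ) else 0) ∂P
    Integrable w (volume : Measure ℝ)
    ∧ (∫ u, w u ∂(volume : Measure ℝ)) = ∫ ω, (Z ω) ^ 2 ∂P
    ∧ (∫ ω, (Z ω) ^ 2 ∂P) = (∫ ω, (Z ω) ^ 2 ∂P) - (∫ ω, Z ω ∂P) ^ 2 := by
  intro w
  set F : Ω × ℝ → ℝ := fun p =>
    Z p.1 * ((if p.2 ≤ Z p.1 then (1:ℝ) else 0) - (if p.2 ≤ 0 then 1 else 0)) with hF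
  have hFmeas : Measurable F := by
    apply (hZmeas.comp measurable_fst).mul
    apply Measurable.sub
    · exact Measurable.ite (measurableSet_le measurable_snd (hZmeas.comp measurable_fst))
        measurable_const measurable_const
    · exact Measurable.ite (measurableSet_le measurable_snd measurable_const)
        measurable_const measurable_const
  have hFint : Integrable F (P.prod volume) := by
    rw [MeasureTheory.integrable_prod_iff hFmeas.aestronglyMeasurable]
    refine ⟨Filter.Eventually.of_forall fun ω => CausalAux.integrable_aux (Z ω), ?_⟩
    exact hZ2.congr (Filter.Eventually.of_forall fun ω =>
      (CausalAux.norm_integral_aux (Z ω)).symm)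
  have hFu : ∀ u : ℝ, Integrable (fun ω => F (ω, u)) P := by
    intro u
    apply Integrable.mono' (hZint.abs.const_mul 2)
    · exact (hFmeas.comp (measurable_id.prodMk measurable_const)).aestronglyMeasurable
    · refine Filter.Eventually.of_forall fun ω => ?_
      simp only [hF, Real.norm_eq_abs, abs_mul]
      have h1 : |(if u ≤ Z ω then (1:ℝ) else 0) - (if u ≤ 0 then 1 else 0)| ≤ 2 := by
        split_ifs <;> norm_num
      calc |Z ω| * |(if u ≤ Z ω then (1:ℝ) else 0) - (if u ≤ 0 then 1 else 0)|
          ≤ |Z ω| * 2 := by gcongr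
        _ = 2 * |Z ω| := by ring
  have hw : ∀ u, w u = ∫ ω, F (ω, u) ∂P := by
    intro u
    have heq : ∀ ω, Z ω * (if u ≤ Z ω then (1:ℝ) else 0)
        = F (ω, u) + (if u ≤ 0 then (1:ℝ) else 0) * Z ω := by
      intro ω; simp only [hF]; ring
    simp only [w, heq]
    rw [integral_add (hFu u) (hZint.const_mul _), integral_const_mul, hZmean, mul_zero, add_zero]
  have hswap : Integrable (F ∘ Prod.swap) ((volume : Measure ℝ).prod P) := hFint.swap
  have hwint : Integrable w (volume : Measure ℝ) := by
    have := hswap.integral_prod_left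
    simpa [Function.comp, Prod.swap, ← hw] using this
  refine ⟨hwint, ?_, by rw [hZmean]; ring⟩
  have hswap' : Integrable (Function.uncurry fun u ω => F (ω, u))
      ((volume : Measure ℝ).prod P) := by
    exact hswap
  calc ∫ u, w u = ∫ u, ∫ ω, F (ω, u) ∂P := by simp only [hw]
    _ = ∫ ω, ∫ u, F (ω, u) ∂(volume : Measure ℝ) ∂P :=
        MeasureTheory.integral_integral_swap hswap'
    _ = ∫ ω, (Z ω) ^ 2 ∂P := by
        refine integral_congr_ae (Filter.Eventually.of_forall fun ω => ?_)
        exact CausalAux.integral_aux (Z ω)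
end

section
/- Let Z be a real random variable with E[Z] = 0 and E[|Z|³] < ∞, and define ω(u) = E[Z·1{Z ≥ u}] for u ∈ ℝ. Then the function u ↦ u·ω(u) is Lebesgue integrable on ℝ and ∫_ℝ u·ω(u) du = E[Z³]/2. In particular, if Z has the same distribution as −Z (i.e., Z is symmetrically distributed), then ∫_ℝ u·ω(u) du = 0, so a linear local projection's weighted average annihilates any second-order (quadratic) component of the marginal effect. -/
open MeasureTheory ProbabilityTheory intervalIntegral


private lemma key_lemma (z : ℝ) :
    Integrable (fun u : ℝ => u * z * ((if u ≤ z then (1:ℝ) else 0) - (if u ≤ 0 then (1:ℝ) else 0))) volume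
    ∧ (∫ u : ℝ, u * z * ((if u ≤ z then (1:ℝ) else 0) - (if u ≤ 0 then (1:ℝ) else 0))) = z ^ 3 / 2
    ∧ (∫ u : ℝ, ‖u * z * ((if u ≤ z then (1:ℝ) else 0) - (if u ≤ 0 then (1:ℝ) else 0))‖) = |z| ^ 3 / 2 := by
  have hid : ∀ a b : ℝ, (∫ x in a..b, x) = (b ^ 2 - a ^ 2) / 2 := fun a b => integral_id
  rcases le_or_gt 0 z with hz | hz
  · have hfun : ∀ u : ℝ, u * z * ((if u ≤ z then (1:ℝ) else 0) - (if u ≤ 0 then (1:ℝ) else 0))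
        = (Set.Ioc 0 z).indicator (fun u => u * z) u := by
      intro u
      by_cases hm : u ∈ Set.Ioc 0 z
      · rw [Set.indicator_of_mem hm, if_pos hm.2, if_neg (not_le.mpr hm.1)]; ring
      · rw [Set.indicator_of_notMem hm]
        simp only [Set.mem_Ioc, not_and, not_le] at hm
        by_cases h2 : u ≤ 0
        · rw [if_pos (h2.trans hz), if_pos h2]; ring
        · rw [if_neg (not_le.mpr (hm (lt_of_not_ge h2))), if_neg h2]; ring
    have hfun' := funext hfun
    have hint : Integrable (fun u : ℝ => u * z * ((if u ≤ z then (1:ℝ) else 0) - (if u ≤ 0 then (1:ℝ) else 0))) volume := by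
      rw [hfun', integrable_indicator_iff measurableSet_Ioc]
      exact (continuous_id.mul continuous_const).integrableOn_Ioc
    refine ⟨hint, ?_, ?_⟩
    · rw [hfun', MeasureTheory.integral_indicator measurableSet_Ioc,
        ← intervalIntegral.integral_of_le hz, intervalIntegral.integral_mul_const, hid]
      ring
    · have hn : (fun u : ℝ => ‖u * z * ((if u ≤ z then (1:ℝ) else 0) - (if u ≤ 0 then (1:ℝ) else 0))‖)
          = (Set.Ioc 0 z).indicator (fun u => u * z) := by
        funext u
        rw [hfun u, norm_indicator_eq_indicator_norm]
        by_cases hm : u ∈ Set.Ioc 0 z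
        · rw [Set.indicator_of_mem hm, Set.indicator_of_mem hm, Real.norm_eq_abs,
            abs_of_nonneg (mul_nonneg (le_of_lt hm.1) hz)]
        · rw [Set.indicator_of_notMem hm, Set.indicator_of_notMem hm]
      rw [hn, MeasureTheory.integral_indicator measurableSet_Ioc,
        ← intervalIntegral.integral_of_le hz, intervalIntegral.integral_mul_const, hid,
        abs_of_nonneg hz]
      ring
  · have hfun : ∀ u : ℝ, u * z * ((if u ≤ z then (1:ℝ) else 0) - (if u ≤ 0 then (1:ℝ) else 0))
        = (Set.Ioc z 0).indicator (fun u => -(u * z)) u := by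
      intro u
      by_cases hm : u ∈ Set.Ioc z 0
      · rw [Set.indicator_of_mem hm, if_neg (not_le.mpr hm.1), if_pos hm.2]; ring
      · rw [Set.indicator_of_notMem hm]
        simp only [Set.mem_Ioc, not_and, not_le] at hm
        by_cases h1 : u ≤ z
        · rw [if_pos h1, if_pos (h1.trans hz.le)]; ring
        · rw [if_neg h1, if_neg (not_le.mpr (hm (lt_of_not_ge h1)))]; ring
    have hfun' := funext hfun
    have hint : Integrable (fun u : ℝ => u * z * ((if u ≤ z then (1:ℝ) else 0) - (if u ≤ 0 then (1:ℝ) else 0))) volume := by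
      rw [hfun', integrable_indicator_iff measurableSet_Ioc]
      exact ((continuous_id.mul continuous_const).neg).integrableOn_Ioc
    refine ⟨hint, ?_, ?_⟩
    · rw [hfun', MeasureTheory.integral_indicator measurableSet_Ioc,
        ← intervalIntegral.integral_of_le (le_of_lt hz), intervalIntegral.integral_neg,
        intervalIntegral.integral_mul_const, hid]
      ring
    · have hn : (fun u : ℝ => ‖u * z * ((if u ≤ z then (1:ℝ) else 0) - (if u ≤ 0 then (1:ℝ) else 0))‖)
          = (Set.Ioc z 0).indicator (fun u => u * z) := by
        funext u
        rw [hfun u, norm_indicator_eq_indicator_norm]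
        by_cases hm : u ∈ Set.Ioc z 0
        · rw [Set.indicator_of_mem hm, Set.indicator_of_mem hm, Real.norm_eq_abs, abs_neg,
            abs_of_nonneg (by nlinarith [hm.2, hz] : (0:ℝ) ≤ u * z)]
        · rw [Set.indicator_of_notMem hm, Set.indicator_of_notMem hm]
      rw [hn, MeasureTheory.integral_indicator measurableSet_Ioc,
        ← intervalIntegral.integral_of_le (le_of_lt hz), intervalIntegral.integral_mul_const, hid,
        abs_of_neg hz]
      ring

/-- Let `Z` be a real random variable with `E[Z] = 0` and
`E[|Z|³] < ∞`, and define `ω(u) = E[Z·1{Z ≥ u}]`.  Then `u ↦ u·ω(u)` is Lebesgue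
integrable on `ℝ` and `∫_ℝ u·ω(u) du = E[Z³]/2`.  In particular, if `Z` has the same
distribution as `−Z` (symmetric shocks), then `∫_ℝ u·ω(u) du = 0`: a linear local
projection's weighted average annihilates any second-order (quadratic) component of
the marginal effect. -/
theorem causal_weights_first_moment
    {Ω : Type*} [MeasurableSpace Ω] (P : Measure Ω) [IsProbabilityMeasure P]
    (Z : Ω → ℝ) (hZmeas : Measurable Z)
    (hZ3 : Integrable (fun ω => |Z ω| ^ 3) P)
    (hZmean : ∫ ω, Z ω ∂P = 0) :
    let w : ℝ → ℝ := fun u => ∫ ω, Z ω * (if u ≤ Z ω then (1 : ℝ) else 0) ∂P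
    Integrable (fun u => u * w u) (volume : Measure ℝ)
    ∧ (∫ u, u * w u ∂(volume : Measure ℝ)) = (∫ ω, (Z ω) ^ 3 ∂P) / 2
    ∧ (Measure.map Z P = Measure.map (fun ω => -Z ω) P →
        (∫ u, u * w u ∂(volume : Measure ℝ)) = 0) := by
  intro w
  set F : Ω × ℝ → ℝ :=
    fun p => p.2 * Z p.1 * ((if p.2 ≤ Z p.1 then (1:ℝ) else 0) - (if p.2 ≤ 0 then (1:ℝ) else 0)) with hF
  have hg : Integrable (fun ω => 1 + |Z ω| ^ 3) P := (integrable_const (1:ℝ)).add hZ3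
  have hZ1 : Integrable Z P := by
    refine Integrable.mono' hg hZmeas.aestronglyMeasurable (ae_of_all _ fun ω => ?_)
    rw [Real.norm_eq_abs]
    nlinarith [mul_nonneg (abs_nonneg (Z ω)) (sq_nonneg (|Z ω| - 1)), sq_nonneg (|Z ω| - 1)]
  have hFmeas : Measurable F := by
    have m1 : Measurable (fun p : Ω × ℝ => if p.2 ≤ Z p.1 then (1:ℝ) else 0) :=
      Measurable.ite (measurableSet_le measurable_snd (hZmeas.comp measurable_fst))
        measurable_const measurable_const
    have m2 : Measurable (fun p : Ω × ℝ => if p.2 ≤ 0 then (1:ℝ) else 0) :=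
      Measurable.ite (measurableSet_le measurable_snd measurable_const)
        measurable_const measurable_const
    exact (measurable_snd.mul (hZmeas.comp measurable_fst)).mul (m1.sub m2)
  have hFint : Integrable F (P.prod volume) := by
    rw [integrable_prod_iff hFmeas.aestronglyMeasurable]
    constructor
    · exact ae_of_all _ fun ω => (key_lemma (Z ω)).1
    · have h : (fun ω => ∫ u, ‖F (ω, u)‖) = fun ω => |Z ω| ^ 3 / 2 :=
        funext fun ω => (key_lemma (Z ω)).2.2
      rw [h]
      exact hZ3.div_const 2
  have hsec : ∀ u : ℝ, ∫ ω, F (ω, u) ∂P = u * w u := by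
    intro u
    have hi1 : Integrable (fun ω => Z ω * (if u ≤ Z ω then (1:ℝ) else 0)) P := by
      refine Integrable.mono' hZ1.abs
        ((hZmeas.mul (Measurable.ite (measurableSet_le measurable_const hZmeas)
          measurable_const measurable_const)).aestronglyMeasurable)
        (ae_of_all _ fun ω => ?_)
      split_ifs <;> simp [abs_nonneg]
    have heq : (fun ω => F (ω, u))
        = fun ω => u * (Z ω * (if u ≤ Z ω then (1:ℝ) else 0))
            - (u * (if u ≤ 0 then (1:ℝ) else 0)) * Z ω := by
      funext ω; simp only [hF]; ring
    rw [heq, integral_sub (hi1.const_mul u) (hZ1.const_mul _), MeasureTheory.integral_const_mul,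
      MeasureTheory.integral_const_mul, hZmean, mul_zero, sub_zero]
  have hinner : ∀ ω : Ω, ∫ u : ℝ, F (ω, u) = (Z ω) ^ 3 / 2 := fun ω => (key_lemma (Z ω)).2.1
  have hIw : Integrable (fun u => u * w u) (volume : Measure ℝ) := by
    have h := hFint.integral_prod_right
    have heq : (fun u => ∫ ω, F (ω, u) ∂P) = fun u => u * w u := funext hsec
    rwa [heq] at h
  have hval : (∫ u, u * w u ∂(volume : Measure ℝ)) = (∫ ω, (Z ω) ^ 3 ∂P) / 2 := by
    have h1 : (∫ u : ℝ, u * w u) = ∫ u : ℝ, ∫ ω, F (ω, u) ∂P :=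
      integral_congr_ae (ae_of_all _ fun u => (hsec u).symm)
    have h2 : (∫ ω, ∫ u : ℝ, F (ω, u) ∂(volume) ∂P) = ∫ u : ℝ, ∫ ω, F (ω, u) ∂P :=
      integral_integral_swap hFint
    have h3 : (∫ ω, ∫ u : ℝ, F (ω, u) ∂(volume) ∂P) = ∫ ω, (Z ω) ^ 3 / 2 ∂P :=
      integral_congr_ae (ae_of_all _ fun ω => hinner ω)
    rw [h1, ← h2, h3, MeasureTheory.integral_div]
  refine ⟨hIw, hval, fun hmap => ?_⟩
  have hmeas3 : Measurable (fun x : ℝ => x ^ 3) := measurable_id.pow_const 3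
  have e1 : (∫ ω, (Z ω) ^ 3 ∂P) = ∫ x, x ^ 3 ∂(Measure.map Z P) :=
    (integral_map hZmeas.aemeasurable hmeas3.aestronglyMeasurable).symm
  have e2 : (∫ x, x ^ 3 ∂(Measure.map (fun ω => -Z ω) P)) = ∫ ω, (-Z ω) ^ 3 ∂P :=
    integral_map hZmeas.neg.aemeasurable hmeas3.aestronglyMeasurable
  have e3 : (∫ ω, (-Z ω) ^ 3 ∂P) = -∫ ω, (Z ω) ^ 3 ∂P := by
    have h : (fun ω => (-Z ω) ^ 3) = fun ω => -((Z ω) ^ 3) := funext fun ω => by ring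
    rw [h, MeasureTheory.integral_neg]
  have hsym : (∫ x, x ^ 3 ∂(Measure.map Z P)) = -∫ ω, (Z ω) ^ 3 ∂P := by
    rw [hmap]; exact e2.trans e3
  have h0 : (∫ ω, (Z ω) ^ 3 ∂P) = 0 := by
    have := e1.trans hsym
    linarith
  rw [hval, h0]; norm_num
end
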